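/- arXiv:2303.12979 — 4 statements merged into one kernel-verified Lean document; each statement's English description precedes it below -/
import Mathlib

section
/- For even d ≥ 2 and k ≥ 1, the k-Toffoli permutation on (Fin d)^{k+1} cannot be written as a composition of permutations each of which is either a single-qudit transposition applied to one coordinate or a |0⟩-controlled X_{01} applied to a (control, target) pair of coordinates, provided k + 1 ≥ 3. (I.e., one borrowed ancilla is necessary: the gate set generates only even permutations while k-Toffoli is odd.) -/
open Equiv Equiv.Perm

/-- Sign of a permutation acting on one coordinate, controlled by the others. -/
lemma sign_coord_perm {n d : ℕ} (m : Fin n)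
    (t : ({ j // j ≠ m } → Fin d) → Equiv.Perm (Fin d))
    (σ : Equiv.Perm (Fin n → Fin d))
    (hσ : ∀ x : Fin n → Fin d,
      σ x = Function.update x m (t (fun j => x j) (x m))) :
    Equiv.Perm.sign σ = ∏ g : ({ j // j ≠ m } → Fin d), Equiv.Perm.sign (t g) := by
  have key : σ = (Equiv.funSplitAt m (Fin d)).symm.permCongr (Equiv.prodCongrLeft t) := by
    apply Equiv.ext
    intro x
    rw [hσ x]
    funext a
    simp only [Equiv.permCongr_apply, Equiv.symm_symm, Equiv.funSplitAt_apply,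
      Equiv.prodCongrLeft_apply, Equiv.funSplitAt_symm_apply, Function.update]
    split_ifs with h
    · subst h; rfl
    · rfl
  rw [key, Equiv.Perm.sign_permCongr, Equiv.Perm.sign_prodCongrLeft]

lemma units_pow_even (u : ℤˣ) {n : ℕ} (hn : Even n) : u ^ n = 1 := by
  obtain ⟨m, rfl⟩ := hn
  rw [← two_mul, pow_mul, Int.units_sq, one_pow]

/-- For even `d ≥ 2` and `k ≥ 2` (so `k + 1 ≥ 3` qudits), the `k`-Toffoli permutation
of `(Fin d)^(k+1)` is not a composition of G-gates, where a G-gate is either a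
single-qudit transposition applied to one coordinate, or a `|0⟩`-controlled `X₀₁`
applied to a (control, target) pair of distinct coordinates. -/
theorem stmt_10 (d k : ℕ) (hd : 2 ≤ d) (heven : Even d) (hk : 2 ≤ k) :
    ¬ ∃ l : List (Equiv.Perm (Fin (k + 1) → Fin d)),
      (∀ σ ∈ l,
        (∃ (m : Fin (k + 1)) (i j : Fin d), i ≠ j ∧
          ∀ x : Fin (k + 1) → Fin d,
            σ x = Function.update x m (Equiv.swap i j (x m))) ∨
        (∃ c m : Fin (k + 1), c ≠ m ∧
          ∀ x : Fin (k + 1) → Fin d,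
            σ x =
              if x c = (⟨0, by omega⟩ : Fin d) then
                Function.update x m
                  (Equiv.swap (⟨0, by omega⟩ : Fin d) (⟨1, by omega⟩ : Fin d) (x m))
              else x)) ∧
      l.prod =
        Equiv.swap
          (fun _ : Fin (k + 1) => (⟨0, by omega⟩ : Fin d))
          (fun i : Fin (k + 1) =>
            if i = Fin.last k then (⟨1, by omega⟩ : Fin d) else (⟨0, by omega⟩ : Fin d)) := by
  rintro ⟨l, hmem, hprod⟩
  -- each gate is even
  have hsign : ∀ σ ∈ l, Equiv.Perm.sign σ = 1 := by
    intro σ hσ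
    rcases hmem σ hσ with ⟨m, i, j, hij, h⟩ | ⟨c, m, hcm, h⟩
    · rw [sign_coord_perm m (fun _ => Equiv.swap i j) σ h]
      rw [Finset.prod_const, Equiv.Perm.sign_swap hij]
      apply units_pow_even
      simp only [Finset.card_univ, Fintype.card_fun, Fintype.card_fin]
      have hcard1 : Fintype.card { j : Fin (k+1) // j ≠ m } = k := by
        simp [Fintype.card_subtype_compl]
      exact heven.pow_of_ne_zero (by omega)
    · have hc' : c ≠ m := hcm
      rw [sign_coord_perm m
        (fun g => if g ⟨c, hc'⟩ = (⟨0, by omega⟩ : Fin d) then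
          Equiv.swap (⟨0, by omega⟩ : Fin d) (⟨1, by omega⟩ : Fin d) else 1) σ ?_]
      · -- compute the product of signs
        have h01 : (⟨0, by omega⟩ : Fin d) ≠ (⟨1, by omega⟩ : Fin d) := by
          simp [Fin.ext_iff]
        calc (∏ g : ({ j // j ≠ m } → Fin d),
              Equiv.Perm.sign (if g ⟨c, hc'⟩ = (⟨0, by omega⟩ : Fin d) then
                Equiv.swap (⟨0, by omega⟩ : Fin d) (⟨1, by omega⟩ : Fin d) else 1))
            = ∏ p : Fin d × ({ j // (j : { j // j ≠ m }) ≠ ⟨c, hc'⟩ } → Fin d),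
              Equiv.Perm.sign (if p.1 = (⟨0, by omega⟩ : Fin d) then
                Equiv.swap (⟨0, by omega⟩ : Fin d) (⟨1, by omega⟩ : Fin d) else 1) := by
              apply Fintype.prod_equiv (Equiv.funSplitAt (⟨c, hc'⟩ : { j // j ≠ m }) (Fin d))
              intro g
              rfl
          _ = 1 := by
              rw [Fintype.prod_prod_type]
              dsimp only
              rw [Finset.prod_congr rfl (fun x _ => Finset.prod_const (s := Finset.univ) (b := sign (if x = (⟨0, by omega⟩ : Fin d) then swap (⟨0, by omega⟩ : Fin d) (⟨1, by omega⟩ : Fin d) else 1)))]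
              have hne : Nonempty { j : { j // j ≠ m } // j ≠ ⟨c, hc'⟩ } := by
                have hcard1 : Fintype.card { j : Fin (k+1) // j ≠ m } = k := by
                  simp [Fintype.card_subtype_compl]
                obtain ⟨a, b, hab⟩ := Fintype.exists_pair_of_one_lt_card (by omega :
                  1 < Fintype.card { j : Fin (k+1) // j ≠ m })
                by_cases ha : a = ⟨c, hc'⟩
                · exact ⟨⟨b, by rw [← ha]; exact (Ne.symm hab)⟩⟩
                · exact ⟨⟨a, ha⟩⟩
              have hcard : Even (Fintype.card ({ j // (j : { j // j ≠ m }) ≠ ⟨c, hc'⟩ } → Fin d)) := by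
                simp only [Fintype.card_fun, Fintype.card_fin]
                exact heven.pow_of_ne_zero Fintype.card_ne_zero
              exact Finset.prod_eq_one (fun v _ => by
                simp only [Finset.prod_const, Finset.card_univ]
                exact units_pow_even _ hcard)
      · intro x
        rw [h x]
        by_cases h1 : x c = (⟨0, by omega⟩ : Fin d) <;>
          simp [h1, Function.update_eq_self]
  -- product of even perms is even
  have h1 : Equiv.Perm.sign l.prod = 1 := by
    rw [map_list_prod]
    apply List.prod_eq_one
    intro u hu
    simp only [List.mem_map] at hu
    obtain ⟨σ, hσ, rfl⟩ := hu
    exact hsign σ hσ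
  -- but the Toffoli is odd
  have hne : (fun _ : Fin (k + 1) => (⟨0, by omega⟩ : Fin d)) ≠
      (fun i : Fin (k + 1) => if i = Fin.last k then (⟨1, by omega⟩ : Fin d)
        else (⟨0, by omega⟩ : Fin d)) := by
    intro hcontra
    have := congrFun hcontra (Fin.last k)
    simp [Fin.ext_iff] at this
  rw [hprod, Equiv.Perm.sign_swap hne] at h1
  exact absurd h1 (by decide)
end

section
/- For odd d ≥ 3, the 2-Toffoli identity holds: for all x₁, x₂, t ∈ Fin d, the composition (|0⟩₁-X_{01} on t) ∘ (|0⟩₁-X_{+1} on x₂) ∘ (|e⟩₂-X_{01} on t) ∘ (|0⟩₁-X_{−1} on x₂) ∘ (|e⟩₂-X_{01} on t), read right to left as in the circuit of Fig. 5, maps (x₁,x₂,t) to (x₁,x₂,X_{01}(t)) if x₁=x₂=0 and to (x₁,x₂,t) otherwise. -/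
/-- The 2-Toffoli identity for odd `d ≥ 3` (circuit of Fig. 5): the composition
`(|e⟩₂-X₀₁ on t) ∘ (|0⟩₁-X₋₁ on x₂) ∘ (|e⟩₂-X₀₁ on t) ∘ (|0⟩₁-X₊₁ on x₂) ∘ (|0⟩₁-X₀₁ on t)`
(read right to left, i.e. applying first `|0⟩₁-X₀₁`, then `|0⟩₁-X₊₁`, then `|e⟩₂-X₀₁`,
then `|0⟩₁-X₋₁`, then `|e⟩₂-X₀₁`, exactly as in the circuit of Fig. 5) maps
`(x₁, x₂, t)` to `(x₁, x₂, X₀₁ t)` if `x₁ = x₂ = 0` and to `(x₁, x₂, t)` otherwise. -/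
theorem stmt_11 (d : ℕ) (hd : 3 ≤ d) (hodd : Odd d) (x₁ x₂ t : Fin d) :
    let z : Fin d := ⟨0, by omega⟩
    let o : Fin d := ⟨1, by omega⟩
    let sw : Fin d → Fin d := Equiv.swap z o
    let e : Fin d → Prop := fun v => (v : ℕ) ≠ 0 ∧ (v : ℕ) % 2 = 0
    -- gate 1: |0⟩₁-X₀₁ on t
    let t1 : Fin d := if x₁ = z then sw t else t
    -- gate 2: |0⟩₁-X₊₁ on x₂
    let x₂1 : Fin d := if x₁ = z then x₂ + o else x₂
    -- gate 3: |e⟩₂-X₀₁ on t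
    let t2 : Fin d := if e x₂1 then sw t1 else t1
    -- gate 4: |0⟩₁-X₋₁ on x₂
    let x₂2 : Fin d := if x₁ = z then x₂1 - o else x₂1
    -- gate 5: |e⟩₂-X₀₁ on t
    let t3 : Fin d := if e x₂2 then sw t2 else t2
    x₂2 = x₂ ∧ t3 = (if x₁ = z ∧ x₂ = z then sw t else t) := by
  intro z o sw e t1 x₂1 t2 x₂2 t3
  haveI : NeZero d := ⟨by omega⟩
  obtain ⟨k, hk⟩ := hodd
  have hxlt : (x₂ : ℕ) < d := x₂.isLt
  have hswsw : ∀ u : Fin d, sw (sw u) = u := fun u => Equiv.swap_apply_self z o u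
  by_cases h1 : x₁ = z
  · have hsub : x₂ + o - o = x₂ := add_sub_cancel_right x₂ o
    simp only [t3, t2, t1, x₂2, x₂1, if_pos h1, hsub]
    refine ⟨by trivial, ?_⟩
    have hv : ((x₂ + o : Fin d) : ℕ) = ((x₂ : ℕ) + 1) % d := by
      simp [Fin.add_def, o]
    by_cases h0 : x₂ = z
    · have hx0 : (x₂ : ℕ) = 0 := by rw [h0]
      have he1 : ¬ e (x₂ + o) := by
        rintro ⟨ha, hb⟩
        have h1d : (0 + 1) % d = 1 := Nat.mod_eq_of_lt (by omega)
        rw [hv, hx0, h1d] at hb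
        omega
      have he0 : ¬ e x₂ := by rintro ⟨ha, _⟩; exact ha hx0
      rw [if_neg he1, if_neg he0, if_pos ⟨h1, h0⟩]
    · have hx0 : (x₂ : ℕ) ≠ 0 := fun h => h0 (Fin.ext h)
      by_cases hpar : (x₂ : ℕ) % 2 = 0
      · have he0 : e x₂ := ⟨hx0, hpar⟩
        have he1 : ¬ e (x₂ + o) := by
          rintro ⟨ha, hb⟩
          rw [hv] at ha hb
          rcases Nat.lt_or_ge ((x₂ : ℕ) + 1) d with h | h
          · rw [Nat.mod_eq_of_lt h] at hb; omega
          · have hdd : (x₂ : ℕ) + 1 = d := by omega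
            rw [hdd, Nat.mod_self] at ha; exact ha rfl
        rw [if_neg he1, if_pos he0,
          if_neg (show ¬(x₁ = z ∧ x₂ = z) from fun h => h0 h.2)]
        exact hswsw t
      · have he0 : ¬ e x₂ := fun h => hpar h.2
        have hlt : (x₂ : ℕ) + 1 < d := by omega
        have he1 : e (x₂ + o) := by
          constructor
          · rw [hv, Nat.mod_eq_of_lt hlt]; omega
          · rw [hv, Nat.mod_eq_of_lt hlt]; omega
        rw [if_pos he1, if_neg he0,
          if_neg (show ¬(x₁ = z ∧ x₂ = z) from fun h => h0 h.2)]
        exact hswsw t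
  · simp only [t3, t2, t1, x₂2, x₂1, if_neg h1]
    refine ⟨by trivial, ?_⟩
    by_cases he : e x₂
    · rw [if_pos he, if_pos he,
        if_neg (show ¬(x₁ = z ∧ x₂ = z) from fun h => h1 h.1)]
      exact hswsw t
    · rw [if_neg he, if_neg he,
        if_neg (show ¬(x₁ = z ∧ x₂ = z) from fun h => h1 h.1)]
end

section
/- For odd d ≥ 3 and k ≥ 2, the permutation P_k restricted to tuples with fixed first k−1 coordinates acts on the last coordinate as either the identity or the d-cycle x ↦ x−1 mod d; consequently P_k is an even permutation of (Fin d)^k when the number of tuples on which it acts as the shift is even, and in general sign(P_k) = (−1)^{(d−1)·M} where M is the number of prefixes (x₁,…,x_{k−1}) with i*=⊥ or x_{i*} even. -/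
/-- For odd `d ≥ 3` and `k ≥ 2`, the permutation `P_k` acts on the last coordinate,
for each fixed prefix, as either the identity or the `d`-cycle `x ↦ x - 1 (mod d)`;
and `sign(P_k) = (-1)^((d-1) · M)`, where `M` is the number of prefixes
`(x₁, …, x_{k-1})` for which `i* = ⊥` or `x_{i*}` is even. -/
theorem stmt_14 (d k : ℕ) (hd : 3 ≤ d) (hodd : Odd d) (hk : 2 ≤ k)
    (P : Equiv.Perm (Fin k → Fin d))
    (hP : ∀ x : Fin k → Fin d,
      P x =
        Function.update x ⟨k - 1, by omega⟩
          (if ∃ i : Fin k, (i : ℕ) < k - 1 ∧ x i ≠ (⟨0, by omega⟩ : Fin d) ∧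
                (∀ j : Fin k, (i : ℕ) < (j : ℕ) → (j : ℕ) < k - 1 →
                  x j = (⟨0, by omega⟩ : Fin d)) ∧
                ((x i : ℕ)) % 2 = 1
           then x ⟨k - 1, by omega⟩
           else x ⟨k - 1, by omega⟩ - (⟨1, by omega⟩ : Fin d))) :
    (∀ x : Fin k → Fin d,
      P x ⟨k - 1, by omega⟩ = x ⟨k - 1, by omega⟩ ∨
      P x ⟨k - 1, by omega⟩ = x ⟨k - 1, by omega⟩ - (⟨1, by omega⟩ : Fin d)) ∧
    Equiv.Perm.sign P =
      (-1) ^ ((d - 1) *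
        (Finset.univ.filter (fun y : Fin k → Fin d =>
          y ⟨k - 1, by omega⟩ = (⟨0, by omega⟩ : Fin d) ∧
          ¬ ∃ i : Fin k, (i : ℕ) < k - 1 ∧ y i ≠ (⟨0, by omega⟩ : Fin d) ∧
              (∀ j : Fin k, (i : ℕ) < (j : ℕ) → (j : ℕ) < k - 1 →
                y j = (⟨0, by omega⟩ : Fin d)) ∧
              ((y i : ℕ)) % 2 = 1)).card) := by
  have hdz : NeZero d := ⟨by omega⟩
  set L : Fin k := ⟨k - 1, by omega⟩ with hL
  set C : (Fin k → Fin d) → Prop := fun x =>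
    ∃ i : Fin k, (i : ℕ) < k - 1 ∧ x i ≠ (⟨0, by omega⟩ : Fin d) ∧
      (∀ j : Fin k, (i : ℕ) < (j : ℕ) → (j : ℕ) < k - 1 →
        x j = (⟨0, by omega⟩ : Fin d)) ∧ ((x i : ℕ)) % 2 = 1 with hC
  have hfirst : ∀ x : Fin k → Fin d,
      P x L = if C x then x L else x L - (⟨1, by omega⟩ : Fin d) := by
    intro x
    rw [hP x, Function.update_self]
  have hpre : ∀ x : Fin k → Fin d, ∀ j : Fin k, j ≠ L → P x j = x j := by
    intro x j hj
    rw [hP x, Function.update_of_ne hj]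
  have hCiff : ∀ x y : Fin k → Fin d,
      (∀ i : Fin k, (i : ℕ) < k - 1 → x i = y i) → (C x ↔ C y) := by
    intro x y h
    constructor
    · rintro ⟨i, hi, h1, h2, h3⟩
      exact ⟨i, hi, by rw [← h i hi]; exact h1,
        fun j hji hj => by rw [← h j hj]; exact h2 j hji hj, by rw [← h i hi]; exact h3⟩
    · rintro ⟨i, hi, h1, h2, h3⟩
      exact ⟨i, hi, by rw [h i hi]; exact h1,
        fun j hji hj => by rw [h j hj]; exact h2 j hji hj, by rw [h i hi]; exact h3⟩
  have hone : (⟨1, by omega⟩ : Fin d) = (1 : Fin d) := by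
    ext; simp [Fin.val_one, Nat.mod_eq_of_lt (by omega : 1 < d)]
  open Fin.NatCast in
  have hiter : ∀ n : ℕ, ∀ x : Fin k → Fin d,
      (∀ j : Fin k, j ≠ L → (P ^ n) x j = x j) ∧
      (P ^ n) x L = if C x then x L else x L - (n : Fin d) := by
    intro n
    induction n with
    | zero => intro x; simp
    | succ n ih =>
      intro x
      have hps : (P ^ (n + 1)) x = P ((P ^ n) x) := by
        rw [pow_succ']; rfl
      have h1 := (ih x).1
      have h2 := (ih x).2
      have hc : C ((P ^ n) x) ↔ C x := by
        apply hCiff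
        intro i hi
        apply h1
        intro hiL
        rw [hiL] at hi
        simp [hL] at hi
      constructor
      · intro j hj
        rw [hps, hpre _ j hj, h1 j hj]
      · rw [hps, hfirst, h2]
        rw [if_congr hc rfl rfl]
        by_cases h : C x
        · simp [h]
        · simp only [h, if_false]
          rw [hone]
          push_cast
          rw [sub_sub]
  have hPd : P ^ d = 1 := by
    apply Equiv.ext; intro x
    funext j
    simp only [Equiv.Perm.coe_one, id_eq]
    by_cases hj : j = L
    · subst hj
      rw [(hiter d x).2]
      by_cases h : C x
      · simp [h]
      · simp [h, Fin.natCast_self]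
    · exact (hiter d x).1 j hj
  have hsign : Equiv.Perm.sign P = 1 := by
    have h1 : (Equiv.Perm.sign P) ^ d = 1 := by
      rw [← map_pow, hPd, map_one]
    rcases Int.units_eq_one_or (Equiv.Perm.sign P) with h | h
    · exact h
    · rw [h, Odd.neg_one_pow hodd] at h1
      exact absurd h1 (by decide)
  constructor
  · intro x
    rw [hfirst x]
    by_cases h : C x
    · left; simp [h]
    · right; simp [h]
  · rw [hsign]
    have he : Even ((d - 1) * (Finset.univ.filter (fun y : Fin k → Fin d =>
          y L = (⟨0, by omega⟩ : Fin d) ∧ ¬ C y)).card) :=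
      (Nat.Odd.sub_odd hodd odd_one).mul_right _
    exact (Even.neg_one_pow he).symm
end

section
/- Counting lower bound: for d ≥ 2 and constant c ≥ 1, if every circuit over cn qudits is built from single-qudit transposition gates and two-qudit |0⟩-controlled X_{01} gates (at most cn(cn−1) + cn·d(d−1)/2 distinct gates), then any N satisfying (number of circuits of length N) ≥ (d^n)! requires N ≥ (n d^n log d)/(4 log(cdn)); hence some n-variable d-ary reversible function needs Ω(n d^n / log n) gates. -/
lemma pow_self_le_factorial_sq (m : ℕ) : m ^ m ≤ m.factorial ^ 2 := by
  have h1 : (∏ x ∈ Finset.range m, (x + 1)) = m.factorial :=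
    Finset.prod_range_add_one_eq_factorial m
  have h2 : (∏ x ∈ Finset.range m, (m - x)) = m.factorial := by
    rw [← h1, ← Finset.prod_range_reflect (fun x => x + 1) m]
    apply Finset.prod_congr rfl
    intro i hi
    have : i < m := Finset.mem_range.mp hi
    omega
  calc m ^ m = ∏ _x ∈ Finset.range m, m := by rw [Finset.prod_const, Finset.card_range]
    _ ≤ ∏ x ∈ Finset.range m, (x + 1) * (m - x) := by
        apply Finset.prod_le_prod'
        intro i hi
        have : i < m := Finset.mem_range.mp hi
        nlinarith [Nat.sub_add_cancel this.le]
    _ = m.factorial ^ 2 := by rw [Finset.prod_mul_distrib, h1, h2, sq]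

/-- Counting lower bound (Lemma 5): for `d ≥ 2`, `c ≥ 1`, `n ≥ 1`, if the number of
circuits of length `N` over the G-gate library on `cn` qudits — at most `(cdn)^(2N)` —
is at least the number `(d^n)!` of `n`-variable `d`-ary reversible functions, then
`N ≥ n·d^n·log d / (4·log(cdn))`. -/
theorem stmt_18 (c d n N : ℕ) (hc : 1 ≤ c) (hd : 2 ≤ d) (hn : 1 ≤ n)
    (h : ((Nat.factorial (d ^ n) : ℕ) : ℝ) ≤ (((c * d * n : ℕ) : ℝ)) ^ (2 * N)) :
    ((n : ℝ) * (d : ℝ) ^ n * Real.log d) / (4 * Real.log ((c : ℝ) * d * n)) ≤ N := by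
  set m := d ^ n with hm
  have hm2 : 2 ≤ m := le_trans hd (Nat.le_self_pow (by omega) d)
  have hcdn : 2 ≤ c * d * n := by
    have := Nat.mul_le_mul (Nat.mul_le_mul hc hd) hn
    simpa using this
  have hcdnR : (2 : ℝ) ≤ (c : ℝ) * d * n := by exact_mod_cast hcdn
  have hlogpos : 0 < Real.log ((c : ℝ) * d * n) := Real.log_pos (by linarith)
  have hfacpos : (0 : ℝ) < (m.factorial : ℝ) := by exact_mod_cast m.factorial_pos
  -- log factorial ≤ 2N log(cdn)
  have h1 : Real.log (m.factorial : ℝ) ≤ (2 * N : ℝ) * Real.log ((c : ℝ) * d * n) := by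
    have := Real.log_le_log hfacpos h
    rw [Real.log_pow] at this
    push_cast at this ⊢
    linarith
  -- m log m ≤ 2 log factorial
  have h2 : (m : ℝ) * Real.log m ≤ 2 * Real.log (m.factorial : ℝ) := by
    have hle : ((m : ℝ)) ^ m ≤ ((m.factorial : ℝ)) ^ 2 := by
      exact_mod_cast pow_self_le_factorial_sq m
    have := Real.log_le_log (by positivity) hle
    rwa [Real.log_pow, Real.log_pow, Nat.cast_ofNat] at this
  -- rewrite m log m
  have h3 : (m : ℝ) * Real.log m = (d : ℝ) ^ n * ((n : ℝ) * Real.log d) := by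
    rw [hm, Nat.cast_pow, Real.log_pow]
  rw [div_le_iff₀ (by positivity)]
  nlinarith [h1, h2, h3, hlogpos]
end
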